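/- Let D be a directed network on node set N. Every contested intermediary i has middleman power zero: if i is an intermediary contested by some node set C ⊆ N \ {i}, then ν_i(D) = 0 (equivalently, its brokerage b_i(D) = 0). -/

import Mathlib

open Finset

variable {V : Type*} [Fintype V] [DecidableEq V]

/-- The arc set is irreflexive: no loops. -/
def IrreflArcs (D : Finset (V × V)) : Prop := ∀ i : V, (i, i) ∉ D

/-- `l` is an `(i,j)`-path in `D`: a list of pairwise distinct nodes, of length at
least 2, starting at `i`, ending at `j`, consecutive nodes joined by arcs of `D`. -/
def IsPath (D : Finset (V × V)) (i j : V) (l : List V) : Prop :=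
  l.Nodup ∧ l.Chain' (fun a b => (a, b) ∈ D) ∧
    l.head? = some i ∧ l.getLast? = some j ∧ 2 ≤ l.length

/-- Node `i` is connected to node `j`: there is at least one `(i,j)`-path. -/
def Conn (D : Finset (V × V)) (i j : V) : Prop := ∃ l : List V, IsPath D i j l

/-- The direct successors `s_i(D)`. -/
def dsucc (D : Finset (V × V)) (i : V) : Finset V := univ.filter fun j => (i, j) ∈ D

/-- The direct predecessors `p_i(D)`. -/
def dpred (D : Finset (V × V)) (i : V) : Finset V := univ.filter fun j => (j, i) ∈ D

open scoped Classical in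
/-- The successor set `S_i(D)`: all nodes to which `i` is connected. -/
noncomputable def succC (D : Finset (V × V)) (i : V) : Finset V :=
  univ.filter fun j => Conn D i j

open scoped Classical in
/-- The predecessor set `P_i(D)`: all nodes that are connected to `i`. -/
noncomputable def predC (D : Finset (V × V)) (i : V) : Finset V :=
  univ.filter fun j => Conn D j i

/-- An intermediary: at least one direct predecessor, at least one direct successor,
and at least two distinct direct neighbours. -/
def Intermediary (D : Finset (V × V)) (i : V) : Prop :=
  (dpred D i).Nonempty ∧ (dsucc D i).Nonempty ∧ 2 ≤ (dsucc D i ∪ dpred D i).card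

/-- The induced subnetwork `D_M` on a node set `M`. -/
def inducedOn (D : Finset (V × V)) (M : Finset V) : Finset (V × V) :=
  D.filter fun e => e.1 ∈ M ∧ e.2 ∈ M

/-- The reduced network `D − i`. -/
def removeNode (D : Finset (V × V)) (i : V) : Finset (V × V) :=
  D.filter fun e => e.1 ≠ i ∧ e.2 ≠ i

/-- The reduced network `D − C`, removing a node set `C`. -/
def removeNodes (D : Finset (V × V)) (C : Finset V) : Finset (V × V) :=
  D.filter fun e => e.1 ∉ C ∧ e.2 ∉ C

/-- `h` is an `(i,j)`-middleman: `i ≠ j`, `h ∉ {i,j}`, there is at least one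
`(i,j)`-path, and `h` lies on every `(i,j)`-path. -/
def MmBetween (D : Finset (V × V)) (h i j : V) : Prop :=
  i ≠ j ∧ h ≠ i ∧ h ≠ j ∧ Conn D i j ∧ ∀ l : List V, IsPath D i j l → h ∈ l

/-- `h` is a middleman: an intermediary that is an `(i,j)`-middleman for some pair. -/
def IsMiddleman (D : Finset (V × V)) (h : V) : Prop :=
  Intermediary D h ∧ ∃ i j : V, MmBetween D h i j

/-- The network is weakly connected. -/
def WeakConn (D : Finset (V × V)) : Prop :=
  ∀ i j : V, i ≠ j → Conn D i j ∨ Conn D j i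

/-- The network `(M, D_M)` is weakly connected. -/
def WeakConnOn (D : Finset (V × V)) (M : Finset V) : Prop :=
  ∀ i ∈ M, ∀ j ∈ M, i ≠ j → Conn (inducedOn D M) i j ∨ Conn (inducedOn D M) j i

/-- The network is strongly connected. -/
def StrongConn (D : Finset (V × V)) : Prop :=
  ∀ i j : V, i ≠ j → Conn D i j

/-- `M` is a component of `D`. -/
def IsComponent (D : Finset (V × V)) (M : Finset V) : Prop :=
  WeakConnOn D M ∧ ∀ i ∉ M, ¬ WeakConnOn D (insert i M)

/-- The coverage `Γ_i(D)` of an intermediary `i`. -/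
noncomputable def coverage (D : Finset (V × V)) (i : V) : Finset (V × V) :=
  (predC D i ×ˢ succC D i).filter fun e => e.1 ≠ e.2

/-- The extended coverage `Γ̄_j(D)` of a node `j`. -/
noncomputable def extCoverage (D : Finset (V × V)) (j : V) : Finset (V × V) :=
  insert j (predC D j) ×ˢ insert j (succC D j)

/-- Intermediary `i` is contested by the node set `C ⊆ N \ {i}`. -/
def ContestedBy (D : Finset (V × V)) (i : V) (C : Finset V) : Prop :=
  i ∉ C ∧ coverage D i ⊆ C.biUnion fun j => extCoverage (removeNode D i) j

/-- The brokerage `b_i(D)`. -/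
noncomputable def brokerage (D : Finset (V × V)) (i : V) : ℤ :=
  (∑ j ∈ univ.erase i,
      (((succC D j).card : ℤ) - ((succC (removeNode D i) j).card : ℤ)))
    - ((predC D i).card : ℤ)

/-- The maximal potential brokerage `B(D)`. -/
noncomputable def maxBrokerage (D : Finset (V × V)) : ℤ :=
  ∑ i : V, (((succC D i).card : ℤ) - ((dsucc D i).card : ℤ))

/-- The middleman power measure `ν_i(D) = b_i(D) / max{B(D), 1}`. -/
noncomputable def power (D : Finset (V × V)) (i : V) : ℚ :=
  (brokerage D i : ℚ) / ((max (maxBrokerage D) 1 : ℤ) : ℚ)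

/-- The robustness `ρ_i(D)` of a middleman `i`. -/
noncomputable def robustness (D : Finset (V × V)) (i : V) : ℕ :=
  sInf {m : ℕ | ∃ D' : Finset (V × V),
      IrreflArcs D' ∧ D ⊂ D' ∧ ¬ IsMiddleman D' i ∧ D'.card = m} - D.card

/-- The dual robustness `ρ*_i(D)` of a middleman `i`. -/
noncomputable def dualRobustness (D : Finset (V × V)) (i : V) : ℕ :=
  D.card - sSup {m : ℕ | ∃ D' : Finset (V × V),
      D' ⊆ D ∧ ¬ IsMiddleman D' i ∧ D'.card = m}

/-- The node-robustness `ψ_i(D)` of a middleman `i`. -/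
noncomputable def nodeRobustness (D : Finset (V × V)) (i : V) : ℕ :=
  sInf {m : ℕ | ∃ C : Finset V,
      i ∉ C ∧ ¬ IsMiddleman (removeNodes D C) i ∧ C.card = m}

/-- Direct neighbours in the underlying undirected network. -/
def nbr (D : Finset (V × V)) (i : V) : Finset V := dsucc D i ∪ dpred D i

/-- The local clustering coefficient `C_i = 2 L_i / (d_i (d_i − 1))`, computed here as
the number of ordered adjacent pairs of neighbours divided by `d_i (d_i − 1)`. -/
def clustering (D : Finset (V × V)) (i : V) : ℚ :=
  (((nbr D i ×ˢ nbr D i).filter fun e =>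
      e.1 ≠ e.2 ∧ ((e.1, e.2) ∈ D ∨ (e.2, e.1) ∈ D)).card : ℚ)
    / (((nbr D i).card : ℚ) * (((nbr D i).card : ℚ) - 1))


private lemma chain'_imp_mem {α : Type*} {r r' : α → α → Prop} :
    ∀ l : List α, l.Chain' r → (∀ a ∈ l, ∀ b ∈ l, r a b → r' a b) → l.Chain' r'
  | [], _, _ => List.isChain_nil
  | [a], _, _ => List.isChain_singleton a
  | a :: b :: t, h, hm => by
    unfold List.Chain' at h ⊢; rw [List.isChain_cons_cons] at h ⊢
    refine ⟨hm a (by simp) b (by simp) h.1, chain'_imp_mem (b :: t) h.2 ?_⟩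
    exact fun x hx y hy => hm x (List.mem_cons_of_mem a hx) y (List.mem_cons_of_mem a hy)

private lemma exists_dup {α : Type*} : ∀ {l : List α}, ¬ l.Nodup →
    ∃ a x b c, l = a ++ x :: (b ++ x :: c)
  | [], h => absurd List.nodup_nil h
  | x :: t, h => by
    rw [List.nodup_cons] at h
    push_neg at h
    by_cases hx : x ∈ t
    · obtain ⟨b, c, rfl⟩ := List.append_of_mem hx
      exact ⟨[], x, b, c, rfl⟩
    · obtain ⟨a, y, b, c, rfl⟩ := exists_dup (h hx)
      exact ⟨x :: a, y, b, c, rfl⟩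

private lemma walk_to_path (D : Finset (V × V)) :
    ∀ (n : ℕ) (l : List V) (i j : V), l.length ≤ n → i ≠ j →
      l.Chain' (fun a b => (a, b) ∈ D) → l.head? = some i → l.getLast? = some j →
      2 ≤ l.length → Conn D i j := by
  intro n
  induction n with
  | zero => intro l i j hl _ _ _ _ h2; omega
  | succ n ih =>
    intro l i j hl hij hch hh hlast h2
    by_cases hnd : l.Nodup
    · exact ⟨l, hnd, hch, hh, hlast, h2⟩
    obtain ⟨a, x, b, c, rfl⟩ := exists_dup hnd
    apply ih (a ++ x :: c) i j ?_ hij ?_ ?_ ?_ ?_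
    · simp at hl ⊢; omega
    · unfold List.Chain' at hch ⊢; rw [List.isChain_append] at hch ⊢
      refine ⟨hch.1, ?_, by simpa using hch.2.2⟩
      have h1 := hch.2.1
      rw [show x :: (b ++ x :: c) = (x :: b) ++ (x :: c) by simp] at h1
      exact (List.isChain_append.mp h1).2.1
    · rw [List.head?_append] at hh ⊢; simpa using hh
    · rw [show a ++ x :: (b ++ x :: c) = (a ++ (x :: b)) ++ (x :: c) by simp] at hlast
      rw [List.getLast?_append] at hlast ⊢
      simpa using hlast
    · match a, c with
      | [], [] =>
        exfalso
        simp at hh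
        rw [show ([] : List V) ++ x :: (b ++ x :: []) = (x :: b) ++ [x] by simp] at hlast
        rw [List.getLast?_concat] at hlast
        exact hij (hh ▸ (Option.some.inj hlast) ▸ rfl)
      | y :: a, c => simp; omega
      | a, y :: c => simp; omega

private lemma isPath_ne {D : Finset (V × V)} {i j : V} {l : List V}
    (h : IsPath D i j l) : i ≠ j := by
  obtain ⟨hnd, _, hh, hlast, h2⟩ := h
  match l with
  | [] => simp at hh
  | [a] => simp at h2
  | a :: b :: t =>
    simp at hh
    subst hh
    have hne : (b :: t) ≠ [] := by simp
    rw [show a :: b :: t = [a] ++ (b :: t) by simp, List.getLast?_append] at hlast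
    rw [List.getLast?_eq_getLast hne] at hlast
    simp at hlast
    intro hij
    have : j ∈ b :: t := hlast ▸ List.getLast_mem hne
    rw [List.nodup_cons] at hnd
    exact hnd.1 (hij ▸ this)

private lemma conn_ne {D : Finset (V × V)} {i j : V} (h : Conn D i j) : i ≠ j := by
  obtain ⟨l, hl⟩ := h; exact isPath_ne hl

private lemma conn_mono {D D' : Finset (V × V)} (hss : D ⊆ D') {i j : V}
    (h : Conn D i j) : Conn D' i j := by
  obtain ⟨l, h1, h2, h3⟩ := h
  exact ⟨l, h1, h2.imp (fun a b hab => hss hab), h3⟩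

private lemma conn_trans {D : Finset (V × V)} {h j k : V} (hk : h ≠ k)
    (h1 : Conn D h j) (h2 : Conn D j k) : Conn D h k := by
  obtain ⟨p, pnd, pch, phd, plast, p2⟩ := h1
  obtain ⟨q, qnd, qch, qhd, qlast, q2⟩ := h2
  match q with
  | [] => simp at qhd
  | [a] => simp at q2
  | a :: y :: t =>
    simp at qhd; subst qhd
    have hpne : p ≠ [] := by rintro rfl; simp at p2
    apply walk_to_path D (p ++ y :: t).length (p ++ y :: t) h k le_rfl hk
    · unfold List.Chain' at qch ⊢; rw [List.isChain_append]
      rw [List.isChain_cons_cons] at qch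
      refine ⟨pch, qch.2, ?_⟩
      intro u hu v hv
      rw [plast] at hu
      simp at hu hv
      rw [← hu, ← hv]
      exact qch.1
    · rw [List.head?_append_of_ne_nil _ hpne]; exact phd
    · rw [List.getLast?_append]
      rw [show a :: y :: t = [a] ++ (y :: t) by simp, List.getLast?_append] at qlast
      have hne : (y :: t) ≠ [] := by simp
      rw [List.getLast?_eq_getLast hne] at qlast ⊢
      simpa using qlast
    · simp; omega

private lemma not_conn_removeNode_right {D : Finset (V × V)} {i h : V} :
    ¬ Conn (removeNode D i) h i := by
  rintro ⟨l, hnd, hch, hh, hlast, h2⟩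
  have h0 : l ≠ [] := by rintro rfl; simp at hlast
  rw [List.getLast?_eq_getLast h0] at hlast
  have hdec := List.dropLast_append_getLast h0
  unfold List.Chain' at hch; rw [← hdec, List.isChain_append] at hch
  have hdl : l.dropLast ≠ [] := by
    intro hl
    have := l.length_dropLast
    rw [hl] at this
    simp at this
    omega
  have := hch.2.2 (l.dropLast.getLast hdl)
    (List.getLast?_eq_getLast hdl) (l.getLast h0) (by simp)
  rw [removeNode, Finset.mem_filter] at this
  exact this.2.2 (Option.some.inj hlast)

private lemma not_conn_removeNode_left {D : Finset (V × V)} {i k : V} :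
    ¬ Conn (removeNode D i) i k := by
  rintro ⟨l, hnd, hch, hh, hlast, h2⟩
  match l with
  | [] => simp at hh
  | [a] => simp at h2
  | a :: b :: t =>
    simp at hh
    unfold List.Chain' at hch; rw [List.isChain_cons_cons] at hch
    have := hch.1
    rw [removeNode, Finset.mem_filter] at this
    exact this.2.1 hh

private lemma conn_remove_of_contested {D : Finset (V × V)} {i : V} {C : Finset V}
    (hC : ContestedBy D i C) {h k : V} (hhi : h ≠ i) (hki : k ≠ i)
    (hc : Conn D h k) : Conn (removeNode D i) h k := by
  classical
  have hne : h ≠ k := conn_ne hc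
  obtain ⟨l, hnd, hch, hhd, hlast, h2⟩ := hc
  by_cases hil : i ∈ l
  case neg =>
    refine ⟨l, hnd, ?_, hhd, hlast, h2⟩
    refine chain'_imp_mem l hch (fun a ha b hb hab => ?_)
    rw [removeNode, Finset.mem_filter]
    exact ⟨hab, fun e => hil (e ▸ ha), fun e => hil (e ▸ hb)⟩
  case pos =>
    obtain ⟨a, b, rfl⟩ := List.append_of_mem hil
    have hane : a ≠ [] := by
      rintro rfl; simp at hhd; exact hhi hhd.symm
    have hbne : b ≠ [] := by
      rintro rfl
      rw [show a ++ i :: [] = a ++ [i] by simp, List.getLast?_concat] at hlast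
      exact hki (Option.some.inj hlast).symm
    have hpi : Conn D h i := by
      refine ⟨a ++ [i], ?_, ?_, ?_, List.getLast?_concat, ?_⟩
      · refine List.Nodup.sublist ?_ hnd
        exact (List.prefix_iff_eq_append.mpr (by simp)).sublist
      · exact hch.prefix ⟨b, by simp⟩
      · rw [List.head?_append_of_ne_nil _ hane]
        rwa [List.head?_append_of_ne_nil _ hane] at hhd
      · rw [List.length_append]
        have : 0 < a.length := List.length_pos_iff.mpr hane
        simp; omega
    have hik : Conn D i k := by
      refine ⟨i :: b, ?_, ?_, rfl, ?_, ?_⟩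
      · exact List.Nodup.sublist (List.sublist_append_right a _) hnd
      · exact hch.suffix ⟨a, rfl⟩
      · rw [show a ++ i :: b = (a ++ [i]) ++ b by simp, List.getLast?_append] at hlast
        rw [show i :: b = [i] ++ b by simp, List.getLast?_append]
        rw [List.getLast?_eq_getLast hbne] at hlast ⊢
        simpa using hlast
      · have : 0 < b.length := List.length_pos_iff.mpr hbne
        simp; omega
    have hcov : (h, k) ∈ coverage D i := by
      rw [coverage, Finset.mem_filter, Finset.mem_product]
      refine ⟨⟨?_, ?_⟩, hne⟩
      · rw [predC, Finset.mem_filter]; exact ⟨Finset.mem_univ _, hpi⟩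
      · rw [succC, Finset.mem_filter]; exact ⟨Finset.mem_univ _, hik⟩
    have := hC.2 hcov
    rw [Finset.mem_biUnion] at this
    obtain ⟨j, hjC, hmem⟩ := this
    rw [extCoverage, Finset.mem_product] at hmem
    obtain ⟨hm1, hm2⟩ := hmem
    rw [Finset.mem_insert] at hm1 hm2
    have hm1' : h = j ∨ h ∈ predC (removeNode D i) j := hm1
    have hm2' : k = j ∨ k ∈ succC (removeNode D i) j := hm2
    clear hm1 hm2
    rcases hm1' with rfl | hm1 <;> rcases hm2' with h2' | hm2
    · exact absurd h2'.symm hne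
    · rw [succC, Finset.mem_filter] at hm2; exact hm2.2
    · rw [predC, Finset.mem_filter] at hm1
      exact h2' ▸ hm1.2
    · rw [predC, Finset.mem_filter] at hm1
      rw [succC, Finset.mem_filter] at hm2
      exact conn_trans hne hm1.2 hm2.2

private lemma succC_remove {D : Finset (V × V)} {i : V} {C : Finset V}
    (hC : ContestedBy D i C) {j : V} (hj : j ≠ i) :
    succC (removeNode D i) j = (succC D j).erase i := by
  classical
  ext k
  rw [Finset.mem_erase, succC, succC, Finset.mem_filter, Finset.mem_filter]
  constructor
  · intro hk
    have hki : k ≠ i := by rintro rfl; exact not_conn_removeNode_right hk.2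
    exact ⟨hki, Finset.mem_univ _, conn_mono (Finset.filter_subset _ _) hk.2⟩
  · rintro ⟨hki, -, hk⟩
    exact ⟨Finset.mem_univ _, conn_remove_of_contested hC hj hki hk⟩

/-- Every contested intermediary `i` has middleman power zero (equivalently, its
brokerage is zero). -/
theorem statement12 {V : Type*} [Fintype V] [DecidableEq V] (D : Finset (V × V))
    (hirr : IrreflArcs D) (i : V) (hi : Intermediary D i)
    (C : Finset V) (hC : ContestedBy D i C) :
    power D i = 0 ∧ brokerage D i = 0 := by
  classical
  have hb : brokerage D i = 0 := by
    rw [brokerage]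
    have hstep : ∀ j ∈ univ.erase i,
        ((succC D j).card : ℤ) - ((succC (removeNode D i) j).card : ℤ)
          = if j ∈ predC D i then 1 else 0 := by
      intro j hj
      rw [succC_remove hC (Finset.mem_erase.mp hj).1]
      have hiff : j ∈ predC D i ↔ i ∈ succC D j := by
        rw [predC, succC, Finset.mem_filter, Finset.mem_filter]
        simp
      by_cases hmem : i ∈ succC D j
      · rw [Finset.card_erase_of_mem hmem, if_pos (hiff.mpr hmem)]
        have h1 : 1 ≤ (succC D j).card := Finset.card_pos.mpr ⟨i, hmem⟩
        rw [Nat.cast_sub h1]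
        ring
      · rw [Finset.erase_eq_of_notMem hmem, sub_self,
          if_neg (fun hmm => hmem (hiff.mp hmm))]
    rw [Finset.sum_congr rfl hstep, Finset.sum_ite_mem]
    have hsub : predC D i ⊆ univ.erase i := by
      intro j hj
      rw [predC, Finset.mem_filter] at hj
      exact Finset.mem_erase.mpr ⟨conn_ne hj.2, Finset.mem_univ _⟩
    rw [Finset.inter_eq_right.mpr hsub, Finset.sum_const, sub_eq_zero]
    simp
  refine ⟨?_, hb⟩
  rw [power, hb]
  simp
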